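/- Estimates for the rescaling functions used in the proof of flasqueness of hybrid spaces: For a real number S ≥ 3 define r_S : [0,∞) → ℝ by r_S(t) = log S − t/S for 0 ≤ t ≤ S/log S; r_S(t) = log S − 1/log S − (t − S/log S) for S/log S ≤ t ≤ log S − 1/log S + S/log S; and r_S(t) = 0 for t ≥ log S − 1/log S + S/log S (these formulas are consistent and define a continuous function since log S ≥ 1). Then: (a) every r_S is Lipschitz with constant 1 and takes values in [0, log S]; and (b) there exists a constant C > 0 such that |r_S(t) − r_{S+1}(t)| ≤ C / log S for all real S ≥ 3 and all t ≥ 0. -/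

import Mathlib

/-- The rescaling function `r_S` used in the proof of flasqueness of hybrid spaces. -/
noncomputable def rS (S : ℝ) (t : ℝ) : ℝ :=
  if t ≤ S / Real.log S then Real.log S - t / S
  else if t ≤ Real.log S - 1 / Real.log S + S / Real.log S then
    Real.log S - 1 / Real.log S - (t - S / Real.log S)
  else 0

open Real

lemma log3_facts {S : ℝ} (hS : 3 ≤ S) :
    0 < S ∧ 1 ≤ Real.log S ∧ Real.log S ≤ S ∧ (Real.log S)^2 ≤ 4 * S := by
  have hS0 : (0:ℝ) < S := by linarith
  have h1 : 1 ≤ Real.log S := by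
    rw [Real.le_log_iff_exp_le hS0]
    have := Real.exp_one_lt_d9
    linarith
  have h2 : Real.log S ≤ S := by
    have := Real.log_le_sub_one_of_pos hS0; linarith
  have h3 : (Real.log S)^2 ≤ 4 * S := by
    have hs0 : 0 ≤ S := le_of_lt hS0
    have hsq : Real.log (Real.sqrt S) ≤ Real.sqrt S - 1 :=
      Real.log_le_sub_one_of_pos (Real.sqrt_pos.mpr hS0)
    have hls : Real.log (Real.sqrt S) = Real.log S / 2 := Real.log_sqrt hs0
    have h4 : Real.log S ≤ 2 * Real.sqrt S := by rw [hls] at hsq; linarith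
    have h5 : Real.sqrt S ^ 2 = S := Real.sq_sqrt hs0
    nlinarith [Real.sqrt_nonneg S]
  exact ⟨hS0, h1, h2, h3⟩

lemma rS_eq {S : ℝ} (hS : 3 ≤ S) (t : ℝ) :
    rS S t = min (max 0 (Real.log S - t / S))
      (max 0 (Real.log S - 1 / Real.log S + S / Real.log S - t)) := by
  obtain ⟨hS0, hl1, hlS, -⟩ := log3_facts hS
  set l := Real.log S with hl
  have hl0 : (0:ℝ) < l := by linarith
  unfold rS
  rw [← hl]
  split_ifs with h1 h2
  · -- t ≤ S / l
    have key : t * l ≤ S := by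
      calc t * l ≤ (S / l) * l := by nlinarith
        _ = S := by field_simp
    have hx : 0 ≤ l - t / S := by
      rcases le_or_gt t 0 with h | h
      · have : t / S ≤ 0 := div_nonpos_of_nonpos_of_nonneg h (le_of_lt hS0)
        linarith
      · rw [sub_nonneg, div_le_iff₀ hS0]
        nlinarith [mul_nonneg (by linarith : (0:ℝ) ≤ l - 1) (le_of_lt h),
          mul_nonneg (by linarith : (0:ℝ) ≤ l - 1) (by linarith : (0:ℝ) ≤ S)]
    have hxy : l - t / S ≤ l - 1 / l + S / l - t := by
      have e : (l - t / S) - (l - 1 / l + S / l - t) = (t * l - S) * (S - 1) / (S * l) := by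
        field_simp; ring
      have : (t * l - S) * (S - 1) / (S * l) ≤ 0 := by
        apply div_nonpos_of_nonpos_of_nonneg
        · nlinarith
        · positivity
      linarith
    rw [max_eq_right hx, max_eq_right (hx.trans hxy), min_eq_left hxy]
  · -- S/l < t ≤ l - 1/l + S/l
    have hyx : l - 1 / l + S / l - t ≤ l - t / S := by
      push_neg at h1
      have key : S ≤ t * l := by
        calc S = (S / l) * l := by field_simp
          _ ≤ t * l := by nlinarith
      have e : (l - t / S) - (l - 1 / l + S / l - t) = (t * l - S) * (S - 1) / (S * l) := by
        field_simp; ring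
      have : 0 ≤ (t * l - S) * (S - 1) / (S * l) := by
        apply div_nonneg _ (by positivity)
        nlinarith
      linarith
    have hy : 0 ≤ l - 1 / l + S / l - t := by linarith
    rw [max_eq_right hy, max_eq_right (hy.trans hyx), min_eq_right hyx]
    ring
  · -- t beyond
    push_neg at h2
    have hy : l - 1 / l + S / l - t ≤ 0 := by linarith
    rw [max_eq_left hy, min_eq_right (le_max_left 0 _)]

lemma lip_aux {S : ℝ} (hS : 3 ≤ S) : LipschitzWith 1 (fun t : ℝ =>
    min (max 0 (Real.log S - t / S))
      (max 0 (Real.log S - 1 / Real.log S + S / Real.log S - t))) := by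
  obtain ⟨hS0, hl1, hlS, -⟩ := log3_facts hS
  have hf : LipschitzWith 1 (fun t : ℝ => Real.log S - t / S) := by
    apply LipschitzWith.of_dist_le_mul
    intro x y
    rw [Real.dist_eq, Real.dist_eq]
    have e : (Real.log S - x / S) - (Real.log S - y / S) = (y - x) / S := by
      field_simp; ring
    rw [e, abs_div, abs_of_pos hS0, abs_sub_comm]
    rw [NNReal.coe_one, one_mul, div_le_iff₀ hS0]
    nlinarith [mul_nonneg (abs_nonneg (x - y)) (by linarith : (0:ℝ) ≤ S - 1)]
  have hg : LipschitzWith 1 (fun t : ℝ =>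
      Real.log S - 1 / Real.log S + S / Real.log S - t) := by
    apply LipschitzWith.of_dist_le_mul
    intro x y
    rw [Real.dist_eq, Real.dist_eq, NNReal.coe_one, one_mul]
    have e : (Real.log S - 1 / Real.log S + S / Real.log S - x) -
        (Real.log S - 1 / Real.log S + S / Real.log S - y) = -(x - y) := by ring
    rw [e, abs_neg]
  have hc : LipschitzWith 1 (fun _ : ℝ => (0:ℝ)) :=
    (LipschitzWith.const 0).weaken zero_le_one
  have h1 := hc.max hf
  have h2 := hc.max hg
  have h3 := h1.min h2
  simpa using h3

set_option maxHeartbeats 1000000 in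
lemma diff_bound {S : ℝ} (hS : 3 ≤ S) {t : ℝ} (ht : 0 ≤ t) :
    |rS S t - rS (S + 1) t| ≤ 20 / Real.log S := by
  obtain ⟨hS0, hl1, hlS, hl2⟩ := log3_facts hS
  obtain ⟨hS0', hl1', hlS', -⟩ := log3_facts (show (3:ℝ) ≤ S + 1 by linarith)
  set l := Real.log S with hldef
  set l' := Real.log (S + 1) with hl'def
  have hl0 : (0:ℝ) < l := by linarith
  have hl'0 : (0:ℝ) < l' := by linarith
  have hll' : l ≤ l' := Real.log_le_log hS0 (by linarith)
  have hd : l' - l ≤ 1 / S := by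
    have e : l' - l = Real.log ((S + 1) / S) := by
      rw [hl'def, hldef, Real.log_div (by linarith) (by linarith)]
    have h := Real.log_le_sub_one_of_pos (show (0:ℝ) < (S + 1) / S by positivity)
    have e2 : (S + 1) / S - 1 = 1 / S := by field_simp; ring
    rw [e]; linarith [e2 ▸ h]
  rw [rS_eq hS t, rS_eq (show (3:ℝ) ≤ S + 1 by linarith) t]
  refine le_trans (abs_min_sub_min_le_max _ _ _ _) (max_le ?_ ?_)
  · -- first pieces
    have hts : t / (S + 1) ≤ t / S :=
      div_le_div_of_nonneg_left ht hS0 (by linarith)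
    have hxx' : l - t / S ≤ l' - t / (S + 1) := by linarith
    have hmm : max 0 (l - t / S) ≤ max 0 (l' - t / (S + 1)) := max_le_max le_rfl hxx'
    rw [abs_sub_comm, abs_of_nonneg (sub_nonneg.mpr hmm)]
    rcases le_or_gt (l' - t / (S + 1)) 0 with h | h
    · rw [max_eq_left h, max_eq_left (hxx'.trans h)]
      simpa using (by positivity : (0:ℝ) ≤ 20 / l)
    · rw [max_eq_right h.le]
      have ht' : t ≤ (S + 1) * l' := by
        have h2 : t / (S + 1) < l' := by linarith
        nlinarith [(div_lt_iff₀ (show (0:ℝ) < S + 1 by linarith)).mp h2]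
      have hxlow : l - t / S ≤ max 0 (l - t / S) := le_max_right _ _
      have e : (l' - t / (S + 1)) - (l - t / S) = (l' - l) + t / (S * (S + 1)) := by
        field_simp; ring
      have h2 : t / (S * (S + 1)) ≤ l' / S := by
        rw [div_le_div_iff₀ (by positivity) hS0]
        nlinarith
      have h3 : l' / S ≤ (l + 1 / S) / S := by
        gcongr
        linarith
      have hfin : 1 / S + (l + 1 / S) / S ≤ 20 / l := by
        rw [le_div_iff₀ hl0]
        have e2 : (1 / S + (l + 1 / S) / S) * l = l / S + l * l / S + l / (S * S) := by
          field_simp; ring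
        have b1 : l / S ≤ 1 := (div_le_one hS0).mpr hlS
        have b2 : l * l / S ≤ 4 := by rw [div_le_iff₀ hS0]; nlinarith
        have b3 : l / (S * S) ≤ 1 := by
          rw [div_le_one (by positivity)]; nlinarith
        linarith [e2 ▸ (by linarith [b1, b2, b3] : l / S + l * l / S + l / (S * S) ≤ (20:ℝ))]
      linarith
  · -- second pieces
    refine le_trans (abs_max_sub_max_le_max 0 _ 0 _) ?_
    rw [sub_self, abs_zero, max_eq_right (abs_nonneg _)]
    have e : (l - 1 / l + S / l - t) - (l' - 1 / l' + (S + 1) / l' - t)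
        = (l - l') + (1 / l' - 1 / l) + (S / l - (S + 1) / l') := by ring
    have hSd : S * l' ≤ (S + 1) * l := by
      nlinarith [mul_le_mul_of_nonneg_left hd hS0.le, mul_one_div_cancel hS0.ne']
    have a2 : 1 / l' ≤ 1 / l := one_div_le_one_div_of_le hl0 hll'
    have a3 : S / l ≤ (S + 1) / l' := by
      rw [div_le_div_iff₀ hl0 hl'0]; linarith
    have t1 : l' - l ≤ 1 / l := hd.trans (one_div_le_one_div_of_le hl0 hlS)
    have t2 : 1 / l - 1 / l' ≤ 1 / l := by
      have : (0:ℝ) < 1 / l' := by positivity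
      linarith
    have t3 : (S + 1) / l' - S / l ≤ 1 / l := by
      have h4 : (S + 1) / l' ≤ (S + 1) / l :=
        div_le_div_of_nonneg_left (by linarith) hl0 hll'
      have h5 : S / l + 1 / l = (S + 1) / l := by rw [← add_div]
      linarith
    rw [abs_le]
    constructor
    · rw [e]
      have hpos : (0:ℝ) < 1 / l := by positivity
      have h3l : (3:ℝ) / l ≤ 20 / l := by
        rw [div_le_div_iff₀ hl0 hl0]; nlinarith
      have hsum : (l' - l) + (1 / l - 1 / l') + ((S + 1) / l' - S / l) ≤ 3 / l := by
        have e3 : (3:ℝ) / l = 1 / l + 1 / l + 1 / l := by ring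
        linarith [e3]
      linarith
    · rw [e]
      have : (0:ℝ) ≤ 20 / l := by positivity
      linarith

/-- (a) each `r_S` (for `S ≥ 3`) is Lipschitz with constant `1` on `[0, ∞)` and takes
values in `[0, log S]` there; (b) there is a constant `C > 0` with
`|r_S t - r_{S+1} t| ≤ C / log S` for all real `S ≥ 3` and all `t ≥ 0`. -/
theorem rS_lipschitz_bounds :
    (∀ S : ℝ, 3 ≤ S →
      LipschitzOnWith 1 (rS S) (Set.Ici 0) ∧
      ∀ t : ℝ, 0 ≤ t → rS S t ∈ Set.Icc 0 (Real.log S)) ∧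
    ∃ C : ℝ, 0 < C ∧ ∀ S : ℝ, 3 ≤ S → ∀ t : ℝ, 0 ≤ t →
      |rS S t - rS (S + 1) t| ≤ C / Real.log S := by
  constructor
  · intro S hS
    obtain ⟨hS0, hl1, hlS, -⟩ := log3_facts hS
    constructor
    · have hfun : rS S = fun t => min (max 0 (Real.log S - t / S))
          (max 0 (Real.log S - 1 / Real.log S + S / Real.log S - t)) :=
        funext (rS_eq hS)
      rw [hfun]
      exact LipschitzWith.lipschitzOnWith (lip_aux hS)
    · intro t ht
      rw [rS_eq hS t, Set.mem_Icc]
      refine ⟨le_min (le_max_left _ _) (le_max_left _ _), ?_⟩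
      refine min_le_of_left_le (max_le (by linarith) ?_)
      have : 0 ≤ t / S := by positivity
      linarith
  · exact ⟨20, by norm_num, fun S hS t ht => diff_bound hS ht⟩
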